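/- arXiv:1809.01313 — 2 statements merged into one kernel-verified Lean document; each statement's English description precedes it below -/
import Mathlib

section
/- If φ and ψ are analytic and non-vanishing on the unit disk, then the function z ↦ log(|φ(z)| + |ψ(z)|) is subharmonic on the unit disk. -/
open Complex MeasureTheory Real

open Set Metric intervalIntegral


lemma softplus_hasDerivAt (t : ℝ) :
    HasDerivAt (fun t => Real.log (1 + Real.exp t)) (Real.exp t / (1 + Real.exp t)) t := by
  have h1 : HasDerivAt (fun t => 1 + Real.exp t) (Real.exp t) t :=
    (Real.hasDerivAt_exp t).const_add 1
  exact h1.log (by positivity)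

lemma softplus_continuous : Continuous (fun t => Real.log (1 + Real.exp t)) := by
  rw [continuous_iff_continuousAt]
  exact fun t => (softplus_hasDerivAt t).differentiableAt.continuousAt

lemma softplus_convex : ConvexOn ℝ Set.univ (fun t => Real.log (1 + Real.exp t)) := by
  have hdiff : Differentiable ℝ (fun t => Real.log (1 + Real.exp t)) :=
    fun t => (softplus_hasDerivAt t).differentiableAt
  apply Monotone.convexOn_univ_of_deriv hdiff
  intro a b hab
  rw [(softplus_hasDerivAt a).deriv, (softplus_hasDerivAt b).deriv]
  have ha : (0:ℝ) < 1 + Real.exp a := by positivity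
  have hb : (0:ℝ) < 1 + Real.exp b := by positivity
  rw [div_le_div_iff₀ ha hb]
  nlinarith [Real.exp_le_exp.2 hab, Real.exp_pos a, Real.exp_pos b]


lemma exists_log {φ : ℂ → ℂ} (hφ : DifferentiableOn ℂ φ (Metric.ball 0 1))
    (hφ0 : ∀ z ∈ Metric.ball (0:ℂ) 1, φ z ≠ 0) :
    ∃ f : ℂ → ℂ, DifferentiableOn ℂ f (Metric.ball 0 1) ∧
      ∀ z ∈ Metric.ball (0:ℂ) 1, Complex.exp (f z) = φ z := by
  have hball : IsOpen (Metric.ball (0:ℂ) 1) := Metric.isOpen_ball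
  have hφa : AnalyticOnNhd ℂ φ (Metric.ball 0 1) := hφ.analyticOnNhd hball
  set h : ℂ → ℂ := fun z => deriv φ z / φ z with hh_def
  have hha : AnalyticOnNhd ℂ h (Metric.ball 0 1) :=
    (hφa.deriv_of_isOpen hball).div hφa hφ0
  have hha' : AnalyticOnNhd ℂ (deriv h) (Metric.ball 0 1) := hha.deriv_of_isOpen hball
  -- star-shapedness
  have hstar : ∀ (t : ℝ), t ∈ Set.Icc (0:ℝ) 1 → ∀ x ∈ Metric.ball (0:ℂ) 1,
      (t : ℂ) * x ∈ Metric.ball (0:ℂ) 1 := by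
    intro t ht x hx
    simp only [Metric.mem_ball, dist_zero_right] at hx ⊢
    calc ‖(t:ℂ) * x‖ = |t| * ‖x‖ := by
          rw [norm_mul, Complex.norm_real, Real.norm_eq_abs]
      _ ≤ 1 * ‖x‖ := by
          apply mul_le_mul_of_nonneg_right _ (norm_nonneg x)
          rw [_root_.abs_of_nonneg ht.1]; exact ht.2
      _ < 1 := by rwa [one_mul]
  set g : ℂ → ℂ := fun z => ∫ t in (0:ℝ)..1, z * h ((t : ℂ) * z) with hg_def
  have key : ∀ z ∈ Metric.ball (0:ℂ) 1, HasDerivAt g (h z) z := by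
    intro z hz
    simp only [Metric.mem_ball, dist_zero_right] at hz
    set ε : ℝ := (1 - ‖z‖) / 2 with hε_def
    have hε : 0 < ε := by simp only [hε_def]; linarith
    set r : ℝ := (1 + ‖z‖) / 2 with hr_def
    have hr1 : r < 1 := by simp only [hr_def]; linarith
    have hxr : ∀ x ∈ Metric.ball z ε, ‖x‖ < r := by
      intro x hx
      simp only [Metric.mem_ball, dist_eq_norm] at hx
      calc ‖x‖ = ‖z + (x - z)‖ := by ring_nf
        _ ≤ ‖z‖ + ‖x - z‖ := norm_add_le _ _
        _ < ‖z‖ + ε := by linarith [hx]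
        _ ≤ r := by simp only [hε_def, hr_def]; linarith
    have hsub : Metric.closedBall (0:ℂ) r ⊆ Metric.ball 0 1 :=
      Metric.closedBall_subset_ball hr1
    -- bounds on compact closed ball
    obtain ⟨C₁, hC₁⟩ : ∃ C, ∀ w ∈ Metric.closedBall (0:ℂ) r, ‖h w‖ ≤ C :=
      (isCompact_closedBall 0 r).exists_bound_of_continuousOn
        ((hha.differentiableOn.continuousOn).mono hsub)
    obtain ⟨C₂, hC₂⟩ : ∃ C, ∀ w ∈ Metric.closedBall (0:ℂ) r, ‖deriv h w‖ ≤ C :=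
      (isCompact_closedBall 0 r).exists_bound_of_continuousOn
        ((hha'.differentiableOn.continuousOn).mono hsub)
    have htx : ∀ (t : ℝ), t ∈ Set.Icc (0:ℝ) 1 → ∀ x ∈ Metric.ball z ε,
        (t : ℂ) * x ∈ Metric.closedBall (0:ℂ) r := by
      intro t ht x hx
      simp only [Metric.mem_closedBall, dist_zero_right]
      calc ‖(t:ℂ) * x‖ = |t| * ‖x‖ := by
            rw [norm_mul, Complex.norm_real, Real.norm_eq_abs]
        _ ≤ 1 * r := by
            apply mul_le_mul (by rw [_root_.abs_of_nonneg ht.1]; exact ht.2) (hxr x hx).le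
              (norm_nonneg _) zero_le_one
        _ = r := one_mul r
    have hmem : ∀ (t : ℝ), t ∈ Set.Icc (0:ℝ) 1 → ∀ x ∈ Metric.ball z ε,
        (t : ℂ) * x ∈ Metric.ball (0:ℂ) 1 := fun t ht x hx => hsub (htx t ht x hx)
    -- the derivative in x
    set F' : ℂ → ℝ → ℂ := fun x t => h ((t:ℂ) * x) + x * (deriv h ((t:ℂ)*x) * (t:ℂ)) with hF'_def
    have hder : ∀ (t : ℝ), t ∈ Set.Icc (0:ℝ) 1 → ∀ x ∈ Metric.ball z ε,
        HasDerivAt (fun y => y * h ((t:ℂ) * y)) (F' x t) x := by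
      intro t ht x hx
      have h1 : HasDerivAt (fun y : ℂ => (t:ℂ) * y) (t:ℂ) x := by
        simpa using (hasDerivAt_id x).const_mul (t:ℂ)
      have h2 : HasDerivAt h (deriv h ((t:ℂ)*x)) ((t:ℂ)*x) :=
        ((hha _ (hmem t ht x hx)).differentiableAt).hasDerivAt
      have h3 : HasDerivAt (fun y : ℂ => h ((t:ℂ)*y)) (deriv h ((t:ℂ)*x) * (t:ℂ)) x :=
        HasDerivAt.comp x h2 h1
      have := (hasDerivAt_id x).mul h3
      rw [one_mul] at this
      exact this
    have hcont_h : ContinuousOn h (Metric.ball 0 1) := hha.differentiableOn.continuousOn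
    have hzball : z ∈ Metric.ball z ε := Metric.mem_ball_self hε
    have hF_meas : ∀ᶠ x in nhds z, AEStronglyMeasurable (fun t : ℝ => x * h ((t:ℂ)*x))
        (volume.restrict (Set.uIoc (0:ℝ) 1)) := by
      filter_upwards [Metric.ball_mem_nhds z hε] with x hx
      apply ContinuousOn.aestronglyMeasurable _ measurableSet_uIoc
      intro t ht
      have ht' : t ∈ Set.Icc (0:ℝ) 1 := by
        rw [Set.uIoc_of_le zero_le_one] at ht; exact ⟨ht.1.le, ht.2⟩
      apply ContinuousWithinAt.mul continuousWithinAt_const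
      have hin : ContinuousAt (fun t : ℝ => (t:ℂ) * x) t :=
        (Complex.continuous_ofReal.mul continuous_const).continuousAt
      have : ContinuousAt (fun t : ℝ => h ((t:ℂ)*x)) t :=
        ContinuousAt.comp (f := fun t : ℝ => (t:ℂ)*x) (hcont_h.continuousAt (hball.mem_nhds (hmem t ht' x hx))) hin
      exact this.continuousWithinAt
    have hF_int : IntervalIntegrable (fun t : ℝ => z * h ((t:ℂ)*z)) volume 0 1 := by
      apply ContinuousOn.intervalIntegrable
      intro t ht
      rw [Set.uIcc_of_le zero_le_one] at ht
      apply ContinuousWithinAt.mul continuousWithinAt_const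
      have hin : ContinuousAt (fun t : ℝ => (t:ℂ) * z) t :=
        (Complex.continuous_ofReal.mul continuous_const).continuousAt
      have : ContinuousAt (fun t : ℝ => h ((t:ℂ)*z)) t :=
        ContinuousAt.comp (f := fun t : ℝ => (t:ℂ)*z) (hcont_h.continuousAt (hball.mem_nhds (hmem t ht z hzball))) hin
      exact this.continuousWithinAt
    have hF'_meas : AEStronglyMeasurable (F' z) (volume.restrict (Set.uIoc (0:ℝ) 1)) := by
      apply ContinuousOn.aestronglyMeasurable _ measurableSet_uIoc
      intro t ht
      have ht' : t ∈ Set.Icc (0:ℝ) 1 := by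
        rw [Set.uIoc_of_le zero_le_one] at ht; exact ⟨ht.1.le, ht.2⟩
      have hc1 : ContinuousAt (fun t : ℝ => (t:ℂ) * z) t :=
        (Complex.continuous_ofReal.mul continuous_const).continuousAt
      have hmem' := hmem t ht' z hzball
      have hc2 : ContinuousAt (fun t : ℝ => h ((t:ℂ)*z)) t :=
        ContinuousAt.comp (f := fun t : ℝ => (t:ℂ)*z) (hcont_h.continuousAt (hball.mem_nhds hmem')) hc1
      have hc3 : ContinuousAt (fun t : ℝ => deriv h ((t:ℂ)*z)) t :=
        ContinuousAt.comp (f := fun t : ℝ => (t:ℂ)*z) ((hha'.differentiableOn.continuousOn).continuousAt (hball.mem_nhds hmem')) hc1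
      exact (hc2.add ((continuousAt_const.mul (hc3.mul Complex.continuous_ofReal.continuousAt)))).continuousWithinAt
    have h_bound : ∀ᵐ t ∂volume, t ∈ Set.uIoc (0:ℝ) 1 → ∀ x ∈ Metric.ball z ε,
        ‖F' x t‖ ≤ C₁ + C₂ := by
      filter_upwards with t ht x hx
      have ht' : t ∈ Set.Icc (0:ℝ) 1 := by
        rw [Set.uIoc_of_le zero_le_one] at ht; exact ⟨ht.1.le, ht.2⟩
      have hmem' := htx t ht' x hx
      have hx1 : ‖x‖ ≤ 1 := by
        have := hxr x hx; linarith
      have htabs : ‖(t:ℂ)‖ ≤ 1 := by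
        rw [Complex.norm_real, Real.norm_eq_abs, _root_.abs_of_nonneg ht'.1]; exact ht'.2
      calc ‖F' x t‖ ≤ ‖h ((t:ℂ)*x)‖ + ‖x * (deriv h ((t:ℂ)*x) * (t:ℂ))‖ := norm_add_le _ _
        _ ≤ C₁ + ‖x‖ * (‖deriv h ((t:ℂ)*x)‖ * ‖(t:ℂ)‖) := by
            gcongr
            · exact hC₁ _ hmem'
            · rw [norm_mul, norm_mul]
        _ ≤ C₁ + 1 * (C₂ * 1) := by
            have h0 : 0 ≤ ‖deriv h ((t:ℂ)*x)‖ := norm_nonneg _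
            have hC₂' := hC₂ _ hmem'
            have : ‖x‖ * (‖deriv h ((t:ℂ)*x)‖ * ‖(t:ℂ)‖) ≤ 1 * (C₂ * 1) := by
              apply mul_le_mul hx1 _ (by positivity) zero_le_one
              apply mul_le_mul hC₂' htabs (norm_nonneg _) (le_trans h0 hC₂')
            linarith
        _ = C₁ + C₂ := by ring
    have h_diff : ∀ᵐ t ∂volume, t ∈ Set.uIoc (0:ℝ) 1 → ∀ x ∈ Metric.ball z ε,
        HasDerivAt (fun y => y * h ((t:ℂ)*y)) (F' x t) x := by
      filter_upwards with t ht x hx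
      have ht' : t ∈ Set.Icc (0:ℝ) 1 := by
        rw [Set.uIoc_of_le zero_le_one] at ht; exact ⟨ht.1.le, ht.2⟩
      exact hder t ht' x hx
    obtain ⟨-, hgd⟩ := intervalIntegral.hasDerivAt_integral_of_dominated_loc_of_deriv_le (Metric.ball_mem_nhds z hε)
      hF_meas hF_int hF'_meas h_bound (intervalIntegrable_const) h_diff
    -- now compute ∫ t in 0..1, F' z t = h z
    have hFTC : (∫ t in (0:ℝ)..1, F' z t) = h z := by
      have hderiv : ∀ t ∈ Set.uIcc (0:ℝ) 1,
          HasDerivAt (fun s : ℝ => (s:ℂ) * h ((s:ℂ)*z)) (F' z t) t := by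
        intro t ht
        rw [Set.uIcc_of_le zero_le_one] at ht
        have hE : HasDerivAt (fun w : ℂ => w * h (w*z))
            (1 * h ((t:ℂ)*z) + (t:ℂ) * (deriv h ((t:ℂ)*z) * z)) ((t:ℂ)) := by
          have h1 : HasDerivAt (fun w : ℂ => w * z) z (t:ℂ) := by
            simpa using (hasDerivAt_id ((t:ℂ))).mul_const z
          have h2 : HasDerivAt h (deriv h ((t:ℂ)*z)) ((t:ℂ)*z) :=
            ((hha _ (hmem t ht z hzball)).differentiableAt).hasDerivAt
          have h3 : HasDerivAt (fun w : ℂ => h (w*z)) (deriv h ((t:ℂ)*z) * z) ((t:ℂ)) :=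
            (HasDerivAt.comp ((t:ℂ)) h2 h1 :)
          exact (hasDerivAt_id _).mul h3
        have := hE.comp_ofReal
        convert this using 1
        simp only [hF'_def]; ring
      have hint : IntervalIntegrable (F' z) volume 0 1 := by
        apply ContinuousOn.intervalIntegrable
        intro t ht
        rw [Set.uIcc_of_le zero_le_one] at ht
        have hc1 : ContinuousAt (fun t : ℝ => (t:ℂ) * z) t :=
          (Complex.continuous_ofReal.mul continuous_const).continuousAt
        have hmem' := hmem t ht z hzball
        have hc2 : ContinuousAt (fun t : ℝ => h ((t:ℂ)*z)) t :=
          ContinuousAt.comp (f := fun t : ℝ => (t:ℂ)*z) (hcont_h.continuousAt (hball.mem_nhds hmem')) hc1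
        have hc3 : ContinuousAt (fun t : ℝ => deriv h ((t:ℂ)*z)) t :=
          ContinuousAt.comp (f := fun t : ℝ => (t:ℂ)*z) ((hha'.differentiableOn.continuousOn).continuousAt (hball.mem_nhds hmem')) hc1
        exact (hc2.add ((continuousAt_const.mul (hc3.mul Complex.continuous_ofReal.continuousAt)))).continuousWithinAt
      have := intervalIntegral.integral_eq_sub_of_hasDerivAt hderiv hint
      rw [this]
      simp [hh_def]
    rw [hFTC] at hgd
    exact hgd
  refine ⟨fun z => g z + Complex.log (φ 0), ?_, ?_⟩
  · intro z hz
    exact ((key z hz).differentiableAt.add_const _).differentiableWithinAt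
  · have h0mem : (0:ℂ) ∈ Metric.ball (0:ℂ) 1 := Metric.mem_ball_self one_pos
    set f : ℂ → ℂ := fun z => g z + Complex.log (φ 0) with hf_def
    set q : ℂ → ℂ := fun z => φ z * Complex.exp (-(f z)) with hq_def
    have hqderiv : ∀ z ∈ Metric.ball (0:ℂ) 1, HasDerivAt q 0 z := by
      intro z hz
      have hφd : HasDerivAt φ (deriv φ z) z :=
        (hφ.differentiableAt (hball.mem_nhds hz)).hasDerivAt
      have hfd : HasDerivAt f (h z) z := (key z hz).add_const _
      have hed : HasDerivAt (fun z => Complex.exp (-(f z)))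
          (Complex.exp (-(f z)) * (-(h z))) z := hfd.neg.cexp
      have := hφd.mul hed
      replace this : HasDerivAt q _ z := this
      convert this using 1
      have hφz := hφ0 z hz
      show (0:ℂ) = deriv φ z * Complex.exp (-(f z)) + φ z * (Complex.exp (-(f z)) * -(deriv φ z / φ z))
      have hc : φ z * (deriv φ z / φ z) = deriv φ z := by
        rw [mul_div_assoc']; exact mul_div_cancel_left₀ _ hφz
      linear_combination (Complex.exp (-(f z))) * hc
    have hconst : ∀ z ∈ Metric.ball (0:ℂ) 1, q z = q 0 := by
      intro z hz
      have hdq : DifferentiableOn ℂ q (Metric.ball (0:ℂ) 1) := fun w hw =>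
        (hqderiv w hw).differentiableAt.differentiableWithinAt
      have hfd : ∀ w ∈ Metric.ball (0:ℂ) 1, fderivWithin ℂ q (Metric.ball (0:ℂ) 1) w = 0 := by
        intro w hw
        rw [fderivWithin_of_isOpen hball hw, (hqderiv w hw).hasFDerivAt.fderiv]
        ext
        simp
      exact (convex_ball (0:ℂ) 1).is_const_of_fderivWithin_eq_zero hdq hfd hz h0mem
    have hg0 : g 0 = 0 := by
      simp [hg_def]
    have hq0 : q 0 = 1 := by
      simp only [hq_def, hf_def, hg0, zero_add]
      rw [Complex.exp_neg, Complex.exp_log (hφ0 0 h0mem)]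
      exact mul_inv_cancel₀ (hφ0 0 h0mem)
    intro z hz
    have := (hconst z hz).trans hq0
    simp only [hq_def] at this
    have hexp := Complex.exp_ne_zero (-(f z))
    field_simp [Complex.exp_neg] at this
    rw [hf_def] at this ⊢
    rw [Complex.exp_neg, ← div_eq_mul_inv, div_eq_one_iff_eq (Complex.exp_ne_zero _)] at this
    exact this.symm

lemma mvp {f : ℂ → ℂ} (hf : DifferentiableOn ℂ f (Metric.ball 0 1)) {z : ℂ} {ρ : ℝ}
    (hρ : 0 < ρ) (hsub : Metric.closedBall z ρ ⊆ Metric.ball (0:ℂ) 1) :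
    (∫ θ in (0:ℝ)..(2*π), f (z + (ρ:ℂ) * Complex.exp (θ * Complex.I))) = (2*π : ℝ) • f z := by
  have hball : IsOpen (Metric.ball (0:ℂ) 1) := Metric.isOpen_ball
  have hc : ContinuousOn f (Metric.closedBall z ρ) := (hf.continuousOn).mono hsub
  have hd : ∀ w ∈ Metric.ball z ρ \ (∅ : Set ℂ), DifferentiableAt ℂ f w := by
    intro w hw
    exact hf.differentiableAt (hball.mem_nhds (hsub (Metric.ball_subset_closedBall hw.1)))
  have hCauchy := Complex.circleIntegral_sub_center_inv_smul_of_differentiable_on_off_countable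
    hρ Set.countable_empty hc hd
  rw [circleIntegral] at hCauchy
  have heq : ∀ θ : ℝ, deriv (circleMap z ρ) θ • ((circleMap z ρ θ - z)⁻¹ • f (circleMap z ρ θ))
      = Complex.I * f (circleMap z ρ θ) := by
    intro θ
    rw [deriv_circleMap, circleMap_sub_center, smul_eq_mul, smul_eq_mul]
    have hne : circleMap 0 ρ θ ≠ 0 := circleMap_ne_center hρ.ne'
    field_simp
  simp only [heq] at hCauchy
  rw [intervalIntegral.integral_const_mul] at hCauchy
  have hI : (Complex.I : ℂ) ≠ 0 := Complex.I_ne_zero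
  have h2 : (∫ θ in (0:ℝ)..(2*π), f (circleMap z ρ θ)) = (2*π : ℝ) • f z := by
    have := hCauchy
    rw [smul_eq_mul] at this
    have : Complex.I * (∫ θ in (0:ℝ)..(2*π), f (circleMap z ρ θ))
        = Complex.I * ((2*π:ℝ) • f z) := by
      rw [this, Complex.real_smul]; push_cast; ring
    exact mul_left_cancel₀ hI this
  exact h2

lemma jensen_softplus {w : ℝ → ℝ} (hw : Continuous w) :
    Real.log (1 + Real.exp ((2*π)⁻¹ * ∫ θ in (0:ℝ)..(2*π), w θ)) ≤
    (2*π)⁻¹ * ∫ θ in (0:ℝ)..(2*π), Real.log (1 + Real.exp (w θ)) := by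
  set μ := volume.restrict (Set.Ioc (0:ℝ) (2*π)) with hμ_def
  have h2π : (0:ℝ) < 2*π := by positivity
  haveI : IsFiniteMeasure μ := ⟨by
    rw [hμ_def, Measure.restrict_apply_univ, Real.volume_Ioc]
    exact ENNReal.ofReal_lt_top⟩
  haveI : NeZero μ := ⟨by
    intro h0
    have h1 : μ Set.univ = 0 := by rw [h0]; simp
    rw [hμ_def, Measure.restrict_apply_univ, Real.volume_Ioc] at h1
    rw [ENNReal.ofReal_eq_zero] at h1
    linarith⟩
  have hint1 : Integrable w μ := hw.integrableOn_Ioc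
  have hint2 : Integrable ((fun t => Real.log (1+Real.exp t)) ∘ w) μ :=
    (softplus_continuous.comp hw).integrableOn_Ioc
  have hJ := softplus_convex.map_average_le softplus_continuous.continuousOn isClosed_univ
    (Filter.Eventually.of_forall fun _ => Set.mem_univ _) hint1 hint2
  rw [average_eq, average_eq] at hJ
  have hμu : μ.real Set.univ = 2*π := by
    rw [measureReal_def, hμ_def, Measure.restrict_apply_univ, Real.volume_Ioc, sub_zero,
      ENNReal.toReal_ofReal h2π.le]
  rw [hμu] at hJ
  have hioc : ∀ (v : ℝ → ℝ), (∫ θ, v θ ∂μ) = ∫ θ in (0:ℝ)..(2*π), v θ := by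
    intro v
    rw [intervalIntegral.integral_of_le h2π.le]
  rw [hioc w, hioc (fun θ => Real.log (1 + Real.exp (w θ)))] at hJ
  simpa [smul_eq_mul] using hJ

/-- A function is subharmonic on a set if it is upper semicontinuous there and satisfies the
sub-mean value inequality on every circle whose closed disk lies in the set. -/
def SubharmonicOn (u : ℂ → ℝ) (s : Set ℂ) : Prop :=
  UpperSemicontinuousOn u s ∧
    ∀ z ∈ s, ∀ ρ : ℝ, 0 < ρ → Metric.closedBall z ρ ⊆ s →
      u z ≤ (2 * π)⁻¹ * ∫ θ in (0:ℝ)..(2 * π), u (z + (ρ : ℂ) * Complex.exp (θ * Complex.I))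

/-- If `φ` and `ψ` are analytic and non-vanishing on the unit disk, then `log (|φ| + |ψ|)` is
subharmonic on the unit disk. -/
theorem log_abs_add_abs_subharmonic (φ ψ : ℂ → ℂ)
    (hφ : AnalyticOn ℂ φ (Metric.ball 0 1)) (hψ : AnalyticOn ℂ ψ (Metric.ball 0 1))
    (hφ0 : ∀ z ∈ Metric.ball (0:ℂ) 1, φ z ≠ 0) (hψ0 : ∀ z ∈ Metric.ball (0:ℂ) 1, ψ z ≠ 0) :
    SubharmonicOn (fun z => Real.log (‖φ z‖ + ‖ψ z‖)) (Metric.ball 0 1) := by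
  have hball : IsOpen (Metric.ball (0:ℂ) 1) := Metric.isOpen_ball
  have hφd : DifferentiableOn ℂ φ (Metric.ball 0 1) :=
    fun x hx => ((hφ x hx).differentiableWithinAt).mono (Set.subset_insert x _)
  have hψd : DifferentiableOn ℂ ψ (Metric.ball 0 1) :=
    fun x hx => ((hψ x hx).differentiableWithinAt).mono (Set.subset_insert x _)
  obtain ⟨f, hfd, hfφ⟩ := exists_log hφd hφ0
  obtain ⟨g, hgd, hgψ⟩ := exists_log hψd hψ0
  have hpos : ∀ w ∈ Metric.ball (0:ℂ) 1, 0 < ‖φ w‖ + ‖ψ w‖ := by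
    intro w hw
    have h1 : 0 < ‖φ w‖ := norm_pos_iff.2 (hφ0 w hw)
    have h2 : 0 ≤ ‖ψ w‖ := norm_nonneg _
    linarith
  have hpt : ∀ w ∈ Metric.ball (0:ℂ) 1, Real.log (‖φ w‖ + ‖ψ w‖)
      = (f w).re + Real.log (1 + Real.exp ((g w).re - (f w).re)) := by
    intro w hw
    have h1 : ‖φ w‖ = Real.exp (f w).re := by
      rw [← hfφ w hw, Complex.norm_exp]
    have h2 : ‖ψ w‖ = Real.exp (g w).re := by
      rw [← hgψ w hw, Complex.norm_exp]
    rw [h1, h2]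
    have h3 : Real.exp (f w).re + Real.exp (g w).re
        = Real.exp (f w).re * (1 + Real.exp ((g w).re - (f w).re)) := by
      rw [mul_add, mul_one, ← Real.exp_add]
      ring_nf
    rw [h3, Real.log_mul (Real.exp_ne_zero _) (by positivity), Real.log_exp]
  constructor
  · apply ContinuousOn.upperSemicontinuousOn
    apply ContinuousOn.log
    · exact ((hφd.continuousOn).norm.add (hψd.continuousOn).norm)
    · exact fun w hw => (hpos w hw).ne'
  · intro z hz ρ hρ hsub
    set P : ℝ → ℂ := fun θ => z + (ρ:ℂ) * Complex.exp (θ * Complex.I) with hP_def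
    have hPmem : ∀ θ : ℝ, P θ ∈ Metric.ball (0:ℂ) 1 := by
      intro θ
      apply hsub
      simp only [hP_def, Metric.mem_closedBall, dist_eq_norm, add_sub_cancel_left]
      rw [norm_mul, Complex.norm_real, Real.norm_eq_abs, _root_.abs_of_nonneg hρ.le]
      rw [Complex.norm_exp_ofReal_mul_I, mul_one]
    have hPcont : Continuous P := by
      apply continuous_const.add
      exact continuous_const.mul ((Complex.continuous_ofReal.mul continuous_const).cexp)
    -- continuity of compositions
    have hfP : Continuous (fun θ : ℝ => f (P θ)) :=
      (hfd.continuousOn).comp_continuous hPcont hPmem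
    have hgP : Continuous (fun θ : ℝ => g (P θ)) :=
      (hgd.continuousOn).comp_continuous hPcont hPmem
    have hufP : Continuous (fun θ : ℝ => (f (P θ)).re) := Complex.continuous_re.comp hfP
    have hw_cont : Continuous (fun θ : ℝ => (g (P θ)).re - (f (P θ)).re) :=
      (Complex.continuous_re.comp hgP).sub hufP
    -- mean value equalities
    have hmvp_f : (∫ θ in (0:ℝ)..(2*π), (f (P θ)).re) = (2*π) * (f z).re := by
      have hI : IntervalIntegrable (fun θ : ℝ => f (P θ)) volume 0 (2*π) :=
        hfP.intervalIntegrable 0 (2*π)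
      have h1 := Complex.reCLM.intervalIntegral_comp_comm hI
      have h2 := mvp hfd hρ hsub
      rw [hP_def] at h1 ⊢
      calc (∫ θ in (0:ℝ)..(2*π), (f (z + (ρ:ℂ) * Complex.exp (θ * Complex.I))).re)
          = (∫ θ in (0:ℝ)..(2*π), f (z + (ρ:ℂ) * Complex.exp (θ * Complex.I))).re := h1
        _ = ((2*π : ℝ) • f z).re := by rw [h2]
        _ = (2*π) * (f z).re := by simp [Complex.real_smul]
    have hmvp_w : (∫ θ in (0:ℝ)..(2*π), ((g (P θ)).re - (f (P θ)).re))
        = (2*π) * ((g z).re - (f z).re) := by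
      have hdiff : DifferentiableOn ℂ (fun w => g w - f w) (Metric.ball 0 1) := hgd.sub hfd
      have hgfP : Continuous (fun θ : ℝ => g (P θ) - f (P θ)) := hgP.sub hfP
      have hI : IntervalIntegrable (fun θ : ℝ => g (P θ) - f (P θ)) volume 0 (2*π) :=
        hgfP.intervalIntegrable 0 (2*π)
      have h1 := Complex.reCLM.intervalIntegral_comp_comm hI
      have h2 := mvp hdiff hρ hsub
      rw [hP_def] at h1 ⊢
      calc (∫ θ in (0:ℝ)..(2*π), ((g (z + (ρ:ℂ) * Complex.exp (θ * Complex.I))).re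
              - (f (z + (ρ:ℂ) * Complex.exp (θ * Complex.I))).re))
          = (∫ θ in (0:ℝ)..(2*π), (g (z + (ρ:ℂ) * Complex.exp (θ * Complex.I))
              - f (z + (ρ:ℂ) * Complex.exp (θ * Complex.I)))).re := h1
        _ = ((2*π : ℝ) • (g z - f z)).re := by rw [h2]
        _ = (2*π) * ((g z).re - (f z).re) := by simp [Complex.real_smul]
    -- rewrite the goal integrand
    have hcongr : (∫ θ in (0:ℝ)..(2*π), Real.log (‖φ (P θ)‖ + ‖ψ (P θ)‖))
        = ∫ θ in (0:ℝ)..(2*π), ((f (P θ)).re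
            + Real.log (1 + Real.exp ((g (P θ)).re - (f (P θ)).re))) := by
      apply intervalIntegral.integral_congr
      intro θ _
      exact hpt (P θ) (hPmem θ)
    have hsplit : (∫ θ in (0:ℝ)..(2*π), ((f (P θ)).re
            + Real.log (1 + Real.exp ((g (P θ)).re - (f (P θ)).re))))
        = (∫ θ in (0:ℝ)..(2*π), (f (P θ)).re)
          + ∫ θ in (0:ℝ)..(2*π), Real.log (1 + Real.exp ((g (P θ)).re - (f (P θ)).re)) := by
      apply intervalIntegral.integral_add
      · exact hufP.intervalIntegrable 0 (2*π)
      · exact (softplus_continuous.comp hw_cont).intervalIntegrable 0 (2*π)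
    have hJ := jensen_softplus hw_cont
    rw [hmvp_w] at hJ
    have h2π : (0:ℝ) < 2*π := by positivity
    have hc2 : (2*π)⁻¹ * ((2*π) * ((g z).re - (f z).re)) = (g z).re - (f z).re := by
      field_simp
    rw [hc2] at hJ
    show Real.log (‖φ z‖ + ‖ψ z‖) ≤ (2 * π)⁻¹ * ∫ θ in (0:ℝ)..(2 * π),
      Real.log (‖φ (z + (ρ:ℂ) * Complex.exp (θ * Complex.I))‖
        + ‖ψ (z + (ρ:ℂ) * Complex.exp (θ * Complex.I))‖)
    have hgoal_int : (∫ θ in (0:ℝ)..(2*π),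
        Real.log (‖φ (z + (ρ:ℂ) * Complex.exp (θ * Complex.I))‖
          + ‖ψ (z + (ρ:ℂ) * Complex.exp (θ * Complex.I))‖))
        = (2*π) * (f z).re
          + ∫ θ in (0:ℝ)..(2*π), Real.log (1 + Real.exp ((g (P θ)).re - (f (P θ)).re)) := by
      rw [← hmvp_f, ← hsplit, ← hcongr]
    rw [hgoal_int, hpt z hz, mul_add]
    have h1 : (2*π)⁻¹ * ((2*π) * (f z).re) = (f z).re := by field_simp
    rw [h1]
    linarith [hJ]
end

section
/- As r → 1⁻, the ratio (∫_{-1}^{1} |f_r(x)|^p dx) / (∫₀^{2π} |f_r(e^{iθ})|^p dθ) tends to (1/2) cos^{-p}(π/(2p)), where f_r(z) = Re(((1+rz)/(1−rz))^{1/p}) and p > 1. -/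
open Complex Real Filter

noncomputable def sharpEll (r : ℝ) : ℝ := Real.log ((1+r)/(1-r))

noncomputable def sharpII (r : ℝ) : ℝ :=
  ∫ θ in (0:ℝ)..(2*π), (‖1 - (r:ℂ) * Complex.exp (θ * Complex.I)‖)⁻¹

noncomputable def sharpD (p r : ℝ) : ℝ :=
  ∫ θ in (0:ℝ)..(2 * π),
    |((((1 : ℂ) + (r : ℂ) * Complex.exp (θ * Complex.I)) /
        ((1 : ℂ) - (r : ℂ) * Complex.exp (θ * Complex.I))) ^
        ((1 / p : ℝ) : ℂ)).re| ^ p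

noncomputable def sharpN (p r : ℝ) : ℝ :=
  ∫ x in (-1:ℝ)..1,
    |((((1 : ℂ) + (r : ℂ) * (x : ℂ)) / ((1 : ℂ) - (r : ℂ) * (x : ℂ))) ^
        ((1 / p : ℝ) : ℂ)).re| ^ p

section cbase
variable {r θ : ℝ}
variable {r θ : ℝ}

lemma habs_z (θ : ℝ) : ‖Complex.exp (θ * Complex.I)‖ = 1 := by
  simpa using Complex.norm_exp_ofReal_mul_I θ

lemma hne (hr : r ∈ Set.Ioo (0:ℝ) 1) (θ : ℝ) :
    (1 : ℂ) - (r : ℂ) * Complex.exp (θ * Complex.I) ≠ 0 := by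
  intro h
  have h1 : (1:ℂ) = (r : ℂ) * Complex.exp (θ * Complex.I) := by
    have := sub_eq_zero.1 h; exact this
  have := congrArg (‖·‖) h1
  rw [norm_one, norm_mul, habs_z, Complex.norm_real, Real.norm_eq_abs, abs_of_pos hr.1, mul_one] at this
  exact absurd this.symm (ne_of_lt hr.2)

lemma habs2 (hr : r ∈ Set.Ioo (0:ℝ) 1) (θ : ℝ) :
    (‖1 - (r:ℂ) * Complex.exp (θ * Complex.I)‖)^2
      = (1-r)^2 + 4*r*Real.sin (θ/2)^2 := by
  rw [Complex.sq_norm, Complex.normSq_apply]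
  have hre : ((1:ℂ) - (r:ℂ) * Complex.exp (θ * Complex.I)).re = 1 - r * Real.cos θ := by
    simp [Complex.exp_ofReal_mul_I_re]
  have him : ((1:ℂ) - (r:ℂ) * Complex.exp (θ * Complex.I)).im = -(r * Real.sin θ) := by
    simp [Complex.exp_ofReal_mul_I_im]
  rw [hre, him]
  have h1 : Real.sin (θ/2)^2 = 1/2 - Real.cos (2*(θ/2))/2 := Real.sin_sq_eq_half_sub _
  have h2 : 2*(θ/2) = θ := by ring
  rw [h2] at h1
  have h3 := Real.sin_sq_add_cos_sq θ
  have h4 : r^2 * (Real.sin θ^2 + Real.cos θ^2) = r^2 * 1 := by rw [h3]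
  nlinarith [h1, h4]

lemma habs_eq_sqrt (hr : r ∈ Set.Ioo (0:ℝ) 1) (θ : ℝ) :
    ‖1 - (r:ℂ) * Complex.exp (θ * Complex.I)‖
      = Real.sqrt ((1-r)^2 + 4*r*Real.sin (θ/2)^2) := by
  rw [← habs2 hr θ, Real.sqrt_sq (norm_nonneg _)]

lemma hwre (hr : r ∈ Set.Ioo (0:ℝ) 1) (θ : ℝ) :
    (((1 : ℂ) + (r : ℂ) * Complex.exp (θ * Complex.I)) /
      ((1 : ℂ) - (r : ℂ) * Complex.exp (θ * Complex.I))).re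
      = (1 - r^2) / ((1-r)^2 + 4*r*Real.sin (θ/2)^2) := by
  rw [Complex.div_re, Complex.normSq_eq_norm_sq, habs2 hr θ]
  have hre : ((1:ℂ) - (r:ℂ) * Complex.exp (θ * Complex.I)).re = 1 - r * Real.cos θ := by
    simp [Complex.exp_ofReal_mul_I_re]
  have him : ((1:ℂ) - (r:ℂ) * Complex.exp (θ * Complex.I)).im = -(r * Real.sin θ) := by
    simp [Complex.exp_ofReal_mul_I_im]
  have hre2 : ((1:ℂ) + (r:ℂ) * Complex.exp (θ * Complex.I)).re = 1 + r * Real.cos θ := by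
    simp [Complex.exp_ofReal_mul_I_re]
  have him2 : ((1:ℂ) + (r:ℂ) * Complex.exp (θ * Complex.I)).im = r * Real.sin θ := by
    simp [Complex.exp_ofReal_mul_I_im]
  rw [hre, him, hre2, him2]
  have h3 := Real.sin_sq_add_cos_sq θ
  have : (1 + r * Real.cos θ) * (1 - r * Real.cos θ) + r * Real.sin θ * -(r * Real.sin θ)
      = 1 - r^2 := by nlinarith [h3]
  rw [← add_div, this]

lemma hwre_pos (hr : r ∈ Set.Ioo (0:ℝ) 1) (θ : ℝ) :
    0 < (((1 : ℂ) + (r : ℂ) * Complex.exp (θ * Complex.I)) /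
      ((1 : ℂ) - (r : ℂ) * Complex.exp (θ * Complex.I))).re := by
  rw [hwre hr θ]
  apply div_pos
  · nlinarith [hr.1, hr.2]
  · have h1 : 0 < (1-r)^2 := pow_pos (by linarith [hr.2]) 2
    nlinarith [sq_nonneg (Real.sin (θ/2)), hr.1]

lemma re_cpow {w : ℂ} (hw : 0 < w.re) (c : ℝ) :
    (w ^ (c:ℂ)).re = ‖w‖ ^ c * Real.cos (c * Complex.arg w) := by
  have hw0 : w ≠ 0 := fun h => by simp [h] at hw
  rw [Complex.cpow_def_of_ne_zero hw0, Complex.exp_re]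
  have h1 : (Complex.log w * (c:ℂ)).re = Real.log (‖w‖) * c := by
    simp [Complex.mul_re, Complex.log_re, Complex.log_im]
  have h2 : (Complex.log w * (c:ℂ)).im = Complex.arg w * c := by
    simp [Complex.mul_im, Complex.log_re, Complex.log_im]
  rw [h1, h2, Real.rpow_def_of_pos (norm_pos_iff.2 hw0), mul_comm c]

end cbase


lemma cospow_close (p : ℝ) (hp : 1 < p) {φ : ℝ} (hφ : |φ| ≤ π/2) :
    |Real.cos (φ/p) ^ p - Real.cos (π/(2*p)) ^ p| ≤ (π/2) * Real.cos φ := by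
  have hp0 : 0 < p := lt_trans one_pos hp
  -- reduce to |φ|
  have hred : Real.cos (φ/p) = Real.cos (|φ|/p) ∧ Real.cos φ = Real.cos |φ| := by
    constructor
    · rw [← Real.cos_abs (φ/p)]
      congr 1
      rw [abs_div, _root_.abs_of_pos hp0]
    · rw [Real.cos_abs]
  rw [hred.1, hred.2]
  set ψ := |φ| with hψ
  have hψ0 : 0 ≤ ψ := abs_nonneg φ
  have hψ2 : ψ ≤ π/2 := hφ
  -- Lipschitz estimate on [0, π/2]
  have key : ∀ x ∈ Set.Icc (0:ℝ) (π/2), HasDerivAt (fun t => Real.cos (t/p) ^ p)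
      (p * Real.cos (x/p) ^ (p-1) * (-Real.sin (x/p) * (1/p))) x := by
    intro x hx
    have hcos : 0 < Real.cos (x/p) := by
      apply Real.cos_pos_of_mem_Ioo
      constructor
      · have : 0 ≤ x / p := div_nonneg hx.1 hp0.le
        linarith [pi_pos]
      · calc x / p ≤ (π/2) / p := by gcongr; exact hx.2
          _ < π/2 := by rw [div_lt_iff₀ hp0]; nlinarith [pi_pos]
    have d1 : HasDerivAt (fun t : ℝ => Real.cos (t / p)) (-Real.sin (x/p) * (1/p)) x := by
      have := (Real.hasDerivAt_cos (x/p)).comp x ((hasDerivAt_id x).div_const p)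
      simpa [Function.comp_def] using this
    have d2 := (Real.hasDerivAt_rpow_const (p := p) (x := Real.cos (x/p))
      (Or.inl hcos.ne')).comp x d1
    exact d2
  have hbound : ∀ x ∈ Set.Icc (0:ℝ) (π/2),
      ‖p * Real.cos (x/p) ^ (p-1) * (-Real.sin (x/p) * (1/p))‖ ≤ 1 := by
    intro x hx
    have hcosle : Real.cos (x/p) ^ (p-1) ≤ 1 :=
      Real.rpow_le_one (Real.cos_nonneg_of_mem_Icc ⟨by
        have : 0 ≤ x / p := div_nonneg hx.1 hp0.le
        linarith [pi_pos], by
        calc x / p ≤ (π/2) / p := by gcongr; exact hx.2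
          _ ≤ π/2 := by rw [div_le_iff₀ hp0]; nlinarith [pi_pos]⟩)
        (Real.cos_le_one _) (by linarith)
    have hcos0 : 0 ≤ Real.cos (x/p) ^ (p-1) := Real.rpow_nonneg (by
      apply Real.cos_nonneg_of_mem_Icc
      constructor
      · have : 0 ≤ x / p := div_nonneg hx.1 hp0.le
        linarith [pi_pos]
      · calc x / p ≤ (π/2) / p := by gcongr; exact hx.2
          _ ≤ π/2 := by rw [div_le_iff₀ hp0]; nlinarith [pi_pos]) _
    rw [Real.norm_eq_abs]
    have habs : |p * Real.cos (x/p) ^ (p-1) * (-Real.sin (x/p) * (1/p))|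
        = p * Real.cos (x/p) ^ (p-1) * (|Real.sin (x/p)| * (1/p)) := by
      rw [abs_mul, abs_mul, abs_mul, abs_neg, _root_.abs_of_pos hp0,
        _root_.abs_of_nonneg hcos0, _root_.abs_of_pos (show (0:ℝ) < 1/p by positivity)]
    rw [habs]
    calc p * Real.cos (x/p) ^ (p-1) * (|Real.sin (x/p)| * (1/p))
        ≤ p * 1 * (1 * (1/p)) := by
          apply mul_le_mul
          · apply mul_le_mul_of_nonneg_left hcosle hp0.le
          · apply mul_le_mul_of_nonneg_right
              (abs_le.2 ⟨Real.neg_one_le_sin _, Real.sin_le_one _⟩) (by positivity)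
          · positivity
          · positivity
      _ = 1 := by field_simp
  have lip := (convex_Icc (0:ℝ) (π/2)).norm_image_sub_le_of_norm_hasDerivWithin_le
    (fun x hx => (key x hx).hasDerivWithinAt) hbound ⟨hψ0, hψ2⟩ ⟨by positivity, le_refl _⟩
  rw [Real.norm_eq_abs] at lip
  have h1 : (π/2)/p = π/(2*p) := by ring
  rw [h1] at lip
  have h2 : ‖π/2 - ψ‖ = π/2 - ψ := by
    rw [Real.norm_eq_abs, _root_.abs_of_nonneg]; linarith
  rw [h2, one_mul] at lip
  have h3 : π/2 - ψ ≤ (π/2) * Real.cos ψ := by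
    have hms := Real.mul_le_sin (x := π/2 - ψ) (by linarith) (by linarith)
    rw [Real.sin_pi_div_two_sub] at hms
    have h4 := mul_le_mul_of_nonneg_left hms (show (0:ℝ) ≤ π/2 by positivity)
    calc π/2 - ψ = (π/2) * (2/π * (π/2 - ψ)) := by
          field_simp
        _ ≤ (π/2) * Real.cos ψ := h4
  calc |Real.cos (ψ/p) ^ p - Real.cos (π/(2*p)) ^ p|
      = |Real.cos (π/(2*p)) ^ p - Real.cos (ψ/p) ^ p| := abs_sub_comm _ _
    _ ≤ π/2 - ψ := lip
    _ ≤ (π/2) * Real.cos ψ := h3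


lemma sharpN_eq (p : ℝ) (hp : 1 < p) {r : ℝ} (hr : r ∈ Set.Ioo (0:ℝ) 1) :
    sharpN p r = 2 / r * sharpEll r - 2 := by
  obtain ⟨hr0, hr1⟩ := hr
  have hp0 : 0 < p := lt_trans one_pos hp
  have hpos : ∀ x ∈ Set.uIcc (-1:ℝ) 1, 0 < 1 - r * x ∧ 0 < 1 + r * x := by
    intro x hx
    rw [Set.uIcc_of_le (by norm_num)] at hx
    have hx1 : |x| ≤ 1 := abs_le.2 ⟨hx.1, hx.2⟩
    have hrx : |r * x| < 1 := by
      rw [abs_mul, abs_of_pos hr0]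
      calc r * |x| ≤ r * 1 := by nlinarith
        _ < 1 := by linarith
    obtain ⟨ha, hb⟩ := abs_lt.1 hrx
    exact ⟨by linarith, by linarith⟩
  have key : Set.EqOn (fun x : ℝ =>
      |((((1 : ℂ) + (r : ℂ) * (x : ℂ)) / ((1 : ℂ) - (r : ℂ) * (x : ℂ))) ^
        ((1 / p : ℝ) : ℂ)).re| ^ p) (fun x : ℝ => (1 + r*x)/(1 - r*x))
      (Set.uIcc (-1:ℝ) 1) := by
    intro x hx
    obtain ⟨h1, h2⟩ := hpos x hx
    have ht : (0:ℝ) ≤ (1 + r*x)/(1 - r*x) := le_of_lt (div_pos h2 h1)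
    have hcast : (((1 : ℂ) + (r : ℂ) * (x : ℂ)) / ((1 : ℂ) - (r : ℂ) * (x : ℂ)))
        = (((1 + r*x)/(1 - r*x) : ℝ) : ℂ) := by push_cast; ring
    simp only [hcast]
    rw [← Complex.ofReal_cpow ht, Complex.ofReal_re,
      _root_.abs_of_nonneg (Real.rpow_nonneg ht _), ← Real.rpow_mul ht,
      one_div_mul_cancel hp0.ne', Real.rpow_one]
  rw [sharpN, intervalIntegral.integral_congr key]
  have hderiv : ∀ x ∈ Set.uIcc (-1:ℝ) 1,
      HasDerivAt (fun x : ℝ => -x - 2/r * Real.log (1 - r*x)) ((1 + r*x)/(1 - r*x)) x := by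
    intro x hx
    obtain ⟨h1, _⟩ := hpos x hx
    have d1 : HasDerivAt (fun x : ℝ => 1 - r*x) (-r) x := by
      simpa using ((hasDerivAt_id x).const_mul r).const_sub 1
    have d2 : HasDerivAt (fun x : ℝ => Real.log (1 - r*x)) (-r/(1-r*x)) x := d1.log h1.ne'
    have d3 := ((hasDerivAt_id x).neg).sub (d2.const_mul (2/r))
    refine d3.congr_deriv ?_
    field_simp
    ring
  have hcont : ContinuousOn (fun x : ℝ => (1 + r*x)/(1 - r*x)) (Set.uIcc (-1:ℝ) 1) := by
    apply ContinuousOn.div (by fun_prop) (by fun_prop)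
    intro x hx
    exact (hpos x hx).1.ne'
  rw [intervalIntegral.integral_eq_sub_of_hasDerivAt hderiv
    (hcont.intervalIntegrable)]
  have e1 : (1:ℝ) - r * (-1) = 1 + r := by ring
  have e2 : (1:ℝ) - r * 1 = 1 - r := by ring
  rw [e1, e2, sharpEll, Real.log_div (by linarith) (by linarith)]
  ring

lemma sharpEll_tendsto : Tendsto sharpEll (nhdsWithin 1 (Set.Ioo 0 1)) atTop := by
  have h1 : Tendsto (fun r : ℝ => 1 - r) (nhdsWithin 1 (Set.Ioo 0 1)) (nhdsWithin 0 (Set.Ioi 0)) := by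
    apply tendsto_nhdsWithin_of_tendsto_nhds_of_eventually_within
    · have : Tendsto (fun r : ℝ => 1 - r) (nhds 1) (nhds 0) := by
        have hc : Continuous (fun r : ℝ => 1 - r) := by fun_prop
        have h := hc.tendsto (1:ℝ)
        simpa using h
      exact this.mono_left nhdsWithin_le_nhds
    · filter_upwards [eventually_mem_nhdsWithin] with r hr
      exact sub_pos.2 hr.2
  have h2 : Tendsto (fun r : ℝ => (1 - r)⁻¹) (nhdsWithin 1 (Set.Ioo 0 1)) atTop :=
    tendsto_inv_nhdsGT_zero.comp h1
  have h3 : Tendsto (fun r : ℝ => 1 + r) (nhdsWithin 1 (Set.Ioo 0 1)) (nhds 2) := by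
    have : Tendsto (fun r : ℝ => 1 + r) (nhds 1) (nhds 2) := by
      have hc : Continuous (fun r : ℝ => 1 + r) := by fun_prop
      have h := hc.tendsto (1:ℝ)
      norm_num at h
      exact h
    exact this.mono_left nhdsWithin_le_nhds
  have h4 : Tendsto (fun r : ℝ => (1 + r)/(1 - r)) (nhdsWithin 1 (Set.Ioo 0 1)) atTop := by
    have := h3.pos_mul_atTop (by norm_num) h2
    apply this.congr
    intro r; rw [div_eq_mul_inv]
  exact Real.tendsto_log_atTop.comp h4


lemma arctan_integral (a c : ℝ) (ha : 0 < a) (hc : 0 < c) :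
    (∫ θ in (0:ℝ)..π, 2*a/(a^2+(c*θ)^2)) ≤ π/c := by
  have hderiv : ∀ x ∈ Set.uIcc (0:ℝ) π, HasDerivAt (fun θ => (2/c) * Real.arctan (c*θ/a))
      (2*a/(a^2+(c*x)^2)) x := by
    intro x _
    have d0 : HasDerivAt (fun θ : ℝ => c*θ/a) (c/a) x := by
      have := ((hasDerivAt_id x).const_mul c).div_const a
      simpa using this
    have d1 := (Real.hasDerivAt_arctan (c*x/a)).comp x d0
    have d2 := d1.const_mul (2/c)
    refine d2.congr_deriv ?_
    have h1 : 0 < a^2 + (c*x)^2 := by positivity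
    field_simp
  have hint : IntervalIntegrable (fun θ : ℝ => 2*a/(a^2+(c*θ)^2))
      MeasureTheory.volume 0 π := by
    apply Continuous.intervalIntegrable
    apply Continuous.div continuous_const (by fun_prop)
    intro x; positivity
  rw [intervalIntegral.integral_eq_sub_of_hasDerivAt hderiv hint]
  have e0 : c*(0:ℝ)/a = 0 := by simp
  rw [e0, Real.arctan_zero, mul_zero, sub_zero]
  have harc := Real.arctan_lt_pi_div_two (c*π/a)
  calc (2/c) * Real.arctan (c*π/a) ≤ (2/c)*(π/2) :=
        mul_le_mul_of_nonneg_left harc.le (by positivity)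
    _ = π/c := by ring

lemma reflect_integral (g : ℝ → ℝ) (hg : ∀ θ, g (2*π - θ) = g θ) :
    (∫ θ in π..(2*π), g θ) = ∫ θ in (0:ℝ)..π, g θ := by
  have h := intervalIntegral.integral_comp_sub_left (a := π) (b := 2*π) g (2*π)
  have h2 : (∫ x in π..(2*π), g (2*π - x)) = ∫ x in π..(2*π), g x :=
    intervalIntegral.integral_congr (fun x _ => hg x)
  rw [h2] at h
  rw [h]
  have e1 : 2*π - 2*π = 0 := by ring
  have e2 : 2*π - π = π := by ring
  rw [e1, e2]

lemma sin_half_reflect (θ : ℝ) : Real.sin ((2*π - θ)/2) = Real.sin (θ/2) := by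
  have : (2*π - θ)/2 = π - θ/2 := by ring
  rw [this, Real.sin_pi_sub]

lemma poisson_bound {r : ℝ} (hr : r ∈ Set.Ioo (1/2:ℝ) 1) :
    (∫ θ in (0:ℝ)..(2*π), (1-r^2)/((1-r)^2+4*r*Real.sin (θ/2)^2)) ≤ 2*π^2 := by
  have hr0 : (0:ℝ) < r := by have := hr.1; linarith
  have hr1 : r < 1 := hr.2
  have ha : 0 < 1 - r := by linarith
  set f : ℝ → ℝ := fun θ => (1-r^2)/((1-r)^2+4*r*Real.sin (θ/2)^2) with hf
  have hden : ∀ θ, 0 < (1-r)^2+4*r*Real.sin (θ/2)^2 := by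
    intro θ
    have h1 : 0 < (1-r)^2 := by positivity
    nlinarith [sq_nonneg (Real.sin (θ/2))]
  have hfc : Continuous f := by
    apply Continuous.div (by fun_prop) (by fun_prop)
    intro θ; exact (hden θ).ne'
  have hsym : ∀ θ, f (2*π - θ) = f θ := by
    intro θ; simp only [hf, sin_half_reflect]
  set c : ℝ := Real.sqrt 2 / π with hc
  have hcpos : 0 < c := by
    apply div_pos (Real.sqrt_pos.2 (by norm_num)) pi_pos
  have hbound : ∀ θ ∈ Set.Icc (0:ℝ) π, f θ ≤ 2*(1-r)/((1-r)^2+(c*θ)^2) := by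
    intro θ hθ
    have hsin : θ/π ≤ Real.sin (θ/2) := by
      have := Real.mul_le_sin (x := θ/2) (by linarith [hθ.1]) (by linarith [hθ.2])
      calc θ/π = 2/π * (θ/2) := by field_simp
        _ ≤ Real.sin (θ/2) := this
    have hsin0 : 0 ≤ θ/π := div_nonneg hθ.1 pi_pos.le
    have hsq : (θ/π)^2 ≤ Real.sin (θ/2)^2 := by
      apply pow_le_pow_left₀ hsin0 hsin
    have hc2 : (c*θ)^2 = 2 * (θ/π)^2 := by
      rw [hc]
      rw [mul_pow, div_pow, Real.sq_sqrt (by norm_num : (0:ℝ) ≤ 2), div_pow]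
      ring
    have hdenle : (1-r)^2+(c*θ)^2 ≤ (1-r)^2+4*r*Real.sin (θ/2)^2 := by
      rw [hc2]
      nlinarith [hsq, hr.1, sq_nonneg (θ/π)]
    apply div_le_div₀ (by positivity)
    · nlinarith
    · positivity
    · exact hdenle
  have hsplit : (∫ θ in (0:ℝ)..(2*π), f θ)
      = (∫ θ in (0:ℝ)..π, f θ) + ∫ θ in π..(2*π), f θ := by
    rw [intervalIntegral.integral_add_adjacent_intervals
      (hfc.intervalIntegrable _ _) (hfc.intervalIntegrable _ _)]
  have hrefl : (∫ θ in π..(2*π), f θ) = ∫ θ in (0:ℝ)..π, f θ := reflect_integral f hsym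
  have hone : (∫ θ in (0:ℝ)..π, f θ) ≤ π^2 := by
    have hgi : IntervalIntegrable (fun θ : ℝ => 2*(1-r)/((1-r)^2+(c*θ)^2))
        MeasureTheory.volume 0 π := by
      apply Continuous.intervalIntegrable
      apply Continuous.div continuous_const (by fun_prop)
      intro x; positivity
    have := intervalIntegral.integral_mono_on pi_pos.le
      (hfc.intervalIntegrable _ _) hgi hbound
    have h2 := arctan_integral (1-r) c ha hcpos
    have h3 : π / c = π^2 / Real.sqrt 2 := by
      rw [hc]; field_simp
    have h4 : π^2 / Real.sqrt 2 ≤ π^2 := by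
      apply div_le_self (by positivity)
      have : (1:ℝ) ≤ Real.sqrt 2 := by
        rw [show (1:ℝ) = Real.sqrt 1 by simp]
        exact Real.sqrt_le_sqrt (by norm_num)
      linarith
    linarith
  rw [hsplit, hrefl]
  linarith

lemma q_formula (p : ℝ) (hp : 1 < p) {r : ℝ} (hr : r ∈ Set.Ioo (0:ℝ) 1) (θ : ℝ) :
    |((((1 : ℂ) + (r : ℂ) * Complex.exp (θ * Complex.I)) /
        ((1 : ℂ) - (r : ℂ) * Complex.exp (θ * Complex.I))) ^ ((1 / p : ℝ) : ℂ)).re| ^ p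
    = ‖(1 + (r:ℂ) * Complex.exp (θ * Complex.I)) /
        (1 - (r:ℂ) * Complex.exp (θ * Complex.I))‖
      * Real.cos (Complex.arg ((1 + (r:ℂ) * Complex.exp (θ * Complex.I)) /
        (1 - (r:ℂ) * Complex.exp (θ * Complex.I))) / p) ^ p := by
  have hp0 : 0 < p := lt_trans one_pos hp
  set w : ℂ := (1 + (r:ℂ) * Complex.exp (θ * Complex.I)) /
      (1 - (r:ℂ) * Complex.exp (θ * Complex.I)) with hw
  have hwre' : 0 < w.re := hwre_pos hr θ
  have hwne : w ≠ 0 := fun h => by rw [h] at hwre'; simp at hwre'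
  rw [re_cpow hwre' (1/p)]
  have harg : |Complex.arg w| < π/2 :=
    Complex.abs_arg_lt_pi_div_two_iff.2 (Or.inl hwre')
  have hargp : |1/p * Complex.arg w| < π/2 := by
    rw [abs_mul, abs_of_pos (by positivity : (0:ℝ) < 1/p)]
    calc 1/p * |Complex.arg w| ≤ 1 * |Complex.arg w| := by
          apply mul_le_mul_of_nonneg_right _ (abs_nonneg _)
          rw [div_le_one hp0]; linarith
      _ < π/2 := by rw [one_mul]; exact harg
  have hcospos : 0 < Real.cos (1/p * Complex.arg w) := by
    apply Real.cos_pos_of_mem_Ioo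
    obtain ⟨h1, h2⟩ := abs_lt.1 hargp
    exact ⟨by linarith, h2⟩
  rw [_root_.abs_of_nonneg (mul_nonneg (Real.rpow_nonneg (norm_nonneg w) _) hcospos.le)]
  rw [Real.mul_rpow (Real.rpow_nonneg (norm_nonneg w) _) hcospos.le]
  rw [← Real.rpow_mul (norm_nonneg w), one_div_mul_cancel hp0.ne', Real.rpow_one]
  rw [one_div_mul_eq_div p (Complex.arg w)]

lemma q_close (p : ℝ) (hp : 1 < p) {r : ℝ} (hr : r ∈ Set.Ioo (0:ℝ) 1) (θ : ℝ) :
    |(|((((1 : ℂ) + (r : ℂ) * Complex.exp (θ * Complex.I)) /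
        ((1 : ℂ) - (r : ℂ) * Complex.exp (θ * Complex.I))) ^ ((1 / p : ℝ) : ℂ)).re| ^ p)
      - 2 * (Real.cos (π / (2 * p)) ^ p)
          * (‖1 - (r:ℂ) * Complex.exp (θ * Complex.I)‖)⁻¹|
    ≤ (π/2) * ((1-r^2)/((1-r)^2+4*r*Real.sin (θ/2)^2)) + Real.cos (π / (2 * p)) ^ p := by
  have hp0 : 0 < p := lt_trans one_pos hp
  set z : ℂ := Complex.exp (θ * Complex.I) with hz
  set u : ℂ := 1 - (r:ℂ) * z with hu
  set w : ℂ := (1 + (r:ℂ) * z) / u with hw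
  set K : ℝ := Real.cos (π / (2 * p)) ^ p with hK
  have hune : u ≠ 0 := hne hr θ
  have huabs : 0 < ‖u‖ := norm_pos_iff.2 hune
  have hwre' : 0 < w.re := hwre_pos hr θ
  have harg : |Complex.arg w| ≤ π/2 :=
    (Complex.abs_arg_lt_pi_div_two_iff.2 (Or.inl hwre')).le
  have hKpos : 0 < K := by
    apply Real.rpow_pos_of_pos
    apply Real.cos_pos_of_mem_Ioo
    constructor
    · have : 0 < π / (2*p) := by positivity
      linarith [pi_pos]
    · rw [div_lt_div_iff₀ (by positivity) (by norm_num : (0:ℝ) < 2)]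
      nlinarith [pi_pos]
  have e1 : |((w : ℂ) ^ ((1 / p : ℝ) : ℂ)).re| ^ p
      = ‖w‖ * Real.cos (Complex.arg w / p) ^ p := q_formula p hp hr θ
  rw [e1]
  have step1 : |‖w‖ * Real.cos (Complex.arg w / p) ^ p - K * ‖w‖|
      ≤ (π/2) * w.re := by
    have := cospow_close p hp harg
    calc |‖w‖ * Real.cos (Complex.arg w / p) ^ p - K * ‖w‖|
        = ‖w‖ * |Real.cos (Complex.arg w / p) ^ p - K| := by
          rw [show ‖w‖ * Real.cos (Complex.arg w / p) ^ p - K * ‖w‖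
              = ‖w‖ * (Real.cos (Complex.arg w / p) ^ p - K) from by ring,
            abs_mul, _root_.abs_of_nonneg (norm_nonneg w)]
      _ ≤ ‖w‖ * ((π/2) * Real.cos (Complex.arg w)) := by
          apply mul_le_mul_of_nonneg_left _ (norm_nonneg w)
          rw [hK]; exact this
      _ = (π/2) * (‖w‖ * Real.cos (Complex.arg w)) := by ring
      _ = (π/2) * w.re := by rw [Complex.norm_mul_cos_arg]
  have habs2' : |‖1 + (r:ℂ)*z‖ - 2| ≤ ‖u‖ := by
    have h := abs_norm_sub_norm_le ((2:ℂ) - u) 2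
    have e2 : (2:ℂ) - u = 1 + (r:ℂ)*z := by rw [hu]; ring
    have e3 : (1:ℂ) + (r:ℂ)*z - 2 = -u := by rw [hu]; ring
    rw [e2, e3] at h
    have e4 : ‖-u‖ = ‖u‖ := by simp
    simpa [e4] using h
  have step2 : |K * ‖w‖ - 2 * K * (‖u‖)⁻¹| ≤ K := by
    have e3 : ‖w‖ = ‖1 + (r:ℂ)*z‖ / ‖u‖ := by
      rw [hw, norm_div]
    rw [e3]
    have : K * (‖1 + (r:ℂ)*z‖ / ‖u‖) - 2 * K * (‖u‖)⁻¹
        = K * (‖1 + (r:ℂ)*z‖ - 2) / ‖u‖ := by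
      field_simp
    rw [this, abs_div, abs_of_pos huabs, abs_mul, abs_of_pos hKpos,
      div_le_iff₀ huabs]
    calc K * |‖1 + (r:ℂ)*z‖ - 2| ≤ K * ‖u‖ :=
          mul_le_mul_of_nonneg_left habs2' hKpos.le
      _ = K * ‖u‖ := rfl
  have hwre2 : w.re = (1-r^2)/((1-r)^2+4*r*Real.sin (θ/2)^2) := hwre hr θ
  calc |‖w‖ * Real.cos (Complex.arg w / p) ^ p - 2 * K * (‖u‖)⁻¹|
      ≤ |‖w‖ * Real.cos (Complex.arg w / p) ^ p - K * ‖w‖|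
        + |K * ‖w‖ - 2 * K * (‖u‖)⁻¹| := by
        apply abs_sub_le
    _ ≤ (π/2) * w.re + K := add_le_add step1 step2
    _ = (π/2) * ((1-r^2)/((1-r)^2+4*r*Real.sin (θ/2)^2)) + K := by rw [hwre2]

lemma sharpD_close (p : ℝ) (hp : 1 < p) : ∃ M : ℝ, ∀ r ∈ Set.Ioo (1/2 : ℝ) 1,
    |sharpD p r - 2 * (Real.cos (π / (2 * p)) ^ p) * sharpII r| ≤ M := by
  have hp0 : 0 < p := lt_trans one_pos hp
  set K : ℝ := Real.cos (π / (2 * p)) ^ p with hK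
  have hKpos : 0 < K := by
    apply Real.rpow_pos_of_pos
    apply Real.cos_pos_of_mem_Ioo
    constructor
    · have : 0 < π / (2*p) := by positivity
      linarith [pi_pos]
    · rw [div_lt_div_iff₀ (by positivity) (by norm_num : (0:ℝ) < 2)]
      nlinarith [pi_pos]
  refine ⟨(π/2) * (2*π^2) + 2*π*K, ?_⟩
  intro r hr
  have hr' : r ∈ Set.Ioo (0:ℝ) 1 := ⟨by have := hr.1; linarith, hr.2⟩
  set q : ℝ → ℝ := fun θ =>
    |((((1 : ℂ) + (r : ℂ) * Complex.exp (θ * Complex.I)) /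
        ((1 : ℂ) - (r : ℂ) * Complex.exp (θ * Complex.I))) ^
        ((1 / p : ℝ) : ℂ)).re| ^ p with hq
  set h : ℝ → ℝ := fun θ =>
    (‖1 - (r:ℂ) * Complex.exp (θ * Complex.I)‖)⁻¹ with hh
  set g : ℝ → ℝ := fun θ =>
    (π/2) * ((1-r^2)/((1-r)^2+4*r*Real.sin (θ/2)^2)) + K with hg
  have hzc : Continuous (fun θ : ℝ => Complex.exp (θ * Complex.I)) := by
    apply Complex.continuous_exp.comp
    fun_prop
  have huc : Continuous (fun θ : ℝ => (1:ℂ) - (r:ℂ) * Complex.exp (θ * Complex.I)) := by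
    fun_prop
  have hwc : Continuous (fun θ : ℝ => ((1:ℂ) + (r:ℂ) * Complex.exp (θ * Complex.I)) /
      ((1:ℂ) - (r:ℂ) * Complex.exp (θ * Complex.I))) := by
    apply Continuous.div (by fun_prop) huc
    intro θ; exact hne hr' θ
  have hqc : Continuous q := by
    have hcw : Continuous (fun θ : ℝ => ((((1:ℂ) + (r:ℂ) * Complex.exp (θ * Complex.I)) /
        ((1:ℂ) - (r:ℂ) * Complex.exp (θ * Complex.I))) ^ ((1 / p : ℝ) : ℂ))) := by
      apply continuous_iff_continuousAt.2
      intro θ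
      have h1 : ContinuousAt (fun ζ : ℂ => ζ ^ ((1/p:ℝ):ℂ))
          (((1:ℂ) + (r:ℂ) * Complex.exp (θ * Complex.I)) /
            ((1:ℂ) - (r:ℂ) * Complex.exp (θ * Complex.I))) :=
        _root_.continuousAt_cpow_const
          (Complex.mem_slitPlane_iff.2 (Or.inl (hwre_pos hr' θ)))
      have h2 := ContinuousAt.comp (x := θ) h1 hwc.continuousAt
      exact h2
    exact ((Complex.continuous_re.comp hcw).abs).rpow_const (fun x => Or.inr hp0.le)
  have hhc : Continuous h := by
    apply Continuous.inv₀ (continuous_norm.comp huc)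
    intro θ; exact norm_ne_zero_iff.2 (hne hr' θ)
  have hden : ∀ θ : ℝ, 0 < (1-r)^2+4*r*Real.sin (θ/2)^2 := by
    intro θ
    have h1 : 0 < (1-r)^2 := pow_pos (by linarith [hr'.2]) 2
    nlinarith [sq_nonneg (Real.sin (θ/2)), hr'.1]
  have hgc : Continuous g := by
    apply Continuous.add _ continuous_const
    apply Continuous.mul continuous_const
    apply Continuous.div (by fun_prop) (by fun_prop)
    intro θ; exact (hden θ).ne'
  have hsub : sharpD p r - 2 * K * sharpII r = ∫ θ in (0:ℝ)..(2*π), (q θ - 2 * K * h θ) := by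
    rw [intervalIntegral.integral_sub (hqc.intervalIntegrable _ _)
      ((show Continuous (fun θ => 2 * K * h θ) from continuous_const.mul hhc).intervalIntegrable _ _)]
    rw [intervalIntegral.integral_const_mul]
    rfl
  rw [hsub]
  have hptwise : ∀ θ ∈ Set.uIoc (0:ℝ) (2*π), ‖q θ - 2 * K * h θ‖ ≤ g θ := by
    intro θ _
    rw [Real.norm_eq_abs]
    exact q_close p hp hr' θ
  have hbd := intervalIntegral.norm_integral_le_of_norm_le
    (f := fun θ => q θ - 2*K*h θ) (g := g) (μ := MeasureTheory.volume)
    (a := 0) (b := 2*π)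
    (by positivity)
    (Filter.Eventually.of_forall fun θ hθ => hptwise θ (Set.Ioc_subset_uIoc hθ))
    (hgc.intervalIntegrable _ _)
  rw [Real.norm_eq_abs] at hbd
  have hgsplit : (∫ θ in (0:ℝ)..(2*π), g θ)
      = (π/2) * (∫ θ in (0:ℝ)..(2*π), (1-r^2)/((1-r)^2+4*r*Real.sin (θ/2)^2)) + 2*π*K := by
    have hfi : IntervalIntegrable (fun θ : ℝ => (1-r^2)/((1-r)^2+4*r*Real.sin (θ/2)^2))
        MeasureTheory.volume 0 (2*π) := by
      apply Continuous.intervalIntegrable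
      apply Continuous.div (by fun_prop) (by fun_prop)
      intro θ; exact (hden θ).ne'
    rw [hg]
    rw [intervalIntegral.integral_add (hfi.const_mul _)
      (intervalIntegrable_const)]
    rw [intervalIntegral.integral_const_mul, intervalIntegral.integral_const]
    rw [smul_eq_mul]
    ring
  have hP := poisson_bound hr
  have hPnn : 0 ≤ ∫ θ in (0:ℝ)..(2*π), (1-r^2)/((1-r)^2+4*r*Real.sin (θ/2)^2) := by
    apply intervalIntegral.integral_nonneg (by positivity)
    intro x _
    have hd := hden x
    have h1r : 0 ≤ 1 - r^2 := by nlinarith [hr'.2, hr'.1]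
    positivity
  have hgnn : 0 ≤ (π/2) * (∫ θ in (0:ℝ)..(2*π),
      (1-r^2)/((1-r)^2+4*r*Real.sin (θ/2)^2)) + 2*π*K :=
    add_nonneg (mul_nonneg (by positivity) hPnn) (by positivity)
  rw [hgsplit] at hbd
  have hmul : (π/2) * (∫ θ in (0:ℝ)..(2*π), (1-r^2)/((1-r)^2+4*r*Real.sin (θ/2)^2))
      ≤ (π/2) * (2*π^2) := mul_le_mul_of_nonneg_left hP (by positivity)
  calc |∫ θ in (0:ℝ)..(2*π), (q θ - 2 * K * h θ)| ≤ _ := hbd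
    _ ≤ (π/2) * (2*π^2) + 2*π*K := by linarith


lemma arsinh_integral (a c T : ℝ) (ha : 0 < a) (hc : 0 < c) :
    (∫ θ in (0:ℝ)..T, (Real.sqrt (a^2 + (c*θ)^2))⁻¹) = c⁻¹ * Real.arsinh (c*T/a) := by
  have hderiv : ∀ x ∈ Set.uIcc (0:ℝ) T, HasDerivAt (fun θ => c⁻¹ * Real.arsinh (c*θ/a))
      ((Real.sqrt (a^2 + (c*x)^2))⁻¹) x := by
    intro x _
    have d0 : HasDerivAt (fun θ : ℝ => c*θ/a) (c/a) x := by
      have := ((hasDerivAt_id x).const_mul c).div_const a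
      simpa using this
    have d1 := (Real.hasDerivAt_arsinh (c*x/a)).comp x d0
    have d2 := d1.const_mul c⁻¹
    refine d2.congr_deriv ?_
    have hsq : 0 < a^2 + (c*x)^2 := by positivity
    have h1 : 1+(c*x/a)^2 = (a^2+(c*x)^2)/a^2 := by field_simp
    have h2 : Real.sqrt (1+(c*x/a)^2) = Real.sqrt (a^2+(c*x)^2) / a := by
      rw [h1, Real.sqrt_div (by positivity), Real.sqrt_sq ha.le]
    rw [h2]
    have h3 : Real.sqrt (a^2+(c*x)^2) ≠ 0 := by positivity
    field_simp
  have hint : IntervalIntegrable (fun θ : ℝ => (Real.sqrt (a^2 + (c*θ)^2))⁻¹)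
      MeasureTheory.volume 0 T := by
    apply Continuous.intervalIntegrable
    apply Continuous.inv₀ (by fun_prop)
    intro x
    positivity
  rw [intervalIntegral.integral_eq_sub_of_hasDerivAt hderiv hint]
  have e0 : c*(0:ℝ)/a = 0 := by simp
  rw [e0, Real.arsinh_zero, mul_zero, sub_zero]

lemma arsinh_div_ell (k : ℝ) (hk : 0 < k) :
    Tendsto (fun r => Real.arsinh (k/(1-r)) / sharpEll r)
      (nhdsWithin 1 (Set.Ioo 0 1)) (nhds 1) := by
  set F := nhdsWithin (1:ℝ) (Set.Ioo 0 1) with hF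
  set c₁ : ℝ → ℝ := fun r => Real.log (k + Real.sqrt ((1-r)^2+k^2)) with hc₁
  set c₂ : ℝ → ℝ := fun r => Real.log (1+r) with hc₂
  set s : ℝ → ℝ := fun r => -Real.log (1-r) with hs
  have hmem : ∀ᶠ r in F, r ∈ Set.Ioo (0:ℝ) 1 := eventually_mem_nhdsWithin
  have h1m : Tendsto (fun r : ℝ => 1 - r) F (nhdsWithin 0 (Set.Ioi 0)) := by
    apply tendsto_nhdsWithin_of_tendsto_nhds_of_eventually_within
    · have hc : Continuous (fun r : ℝ => 1 - r) := by fun_prop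
      have h := hc.tendsto (1:ℝ)
      norm_num at h
      exact h.mono_left nhdsWithin_le_nhds
    · filter_upwards [hmem] with r hr
      exact sub_pos.2 hr.2
  have hstop : Tendsto s F atTop := by
    have hlog : Tendsto (fun r : ℝ => Real.log (1-r)) F atBot := by
      apply (Real.tendsto_log_nhdsNE_zero.comp
        (h1m.mono_right (nhdsWithin_mono 0 (fun x hx => ne_of_gt hx))))
    exact tendsto_neg_atBot_atTop.comp hlog
  have hc1t : Tendsto c₁ F (nhds (Real.log (2*k))) := by
    have hcont : Continuous (fun r : ℝ => k + Real.sqrt ((1-r)^2+k^2)) := by fun_prop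
    have h0 : Tendsto (fun r : ℝ => k + Real.sqrt ((1-r)^2+k^2)) (nhds 1) (nhds (2*k)) := by
      have := hcont.tendsto (1:ℝ)
      have e : k + Real.sqrt ((1-(1:ℝ))^2+k^2) = 2*k := by
        rw [show (1-(1:ℝ))^2+k^2 = k^2 by ring, Real.sqrt_sq hk.le]
        ring
      rwa [e] at this
    exact ((Real.continuousAt_log (by positivity : (2*k) ≠ 0)).tendsto.comp h0).mono_left
      nhdsWithin_le_nhds
  have hc2t : Tendsto c₂ F (nhds (Real.log 2)) := by
    have hcont : Continuous (fun r : ℝ => (1:ℝ)+r) := by fun_prop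
    have h0 := hcont.tendsto (1:ℝ)
    norm_num at h0
    exact ((Real.continuousAt_log (by norm_num : (2:ℝ) ≠ 0)).tendsto.comp h0).mono_left
      nhdsWithin_le_nhds
  have hratio : Tendsto (fun r => (c₁ r / s r + 1)/(c₂ r / s r + 1)) F (nhds 1) := by
    have h1 : Tendsto (fun r => c₁ r / s r) F (nhds 0) := by
      have := hc1t.mul hstop.inv_tendsto_atTop
      rw [mul_zero] at this
      exact this.congr fun r => (div_eq_mul_inv _ _).symm
    have h2 : Tendsto (fun r => c₂ r / s r) F (nhds 0) := by
      have := hc2t.mul hstop.inv_tendsto_atTop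
      rw [mul_zero] at this
      exact this.congr fun r => (div_eq_mul_inv _ _).symm
    have h3 := (h1.add (tendsto_const_nhds (x := (1:ℝ)))).div
      (h2.add (tendsto_const_nhds (x := (1:ℝ)))) (by norm_num : (0:ℝ) + 1 ≠ 0)
    norm_num at h3
    exact h3
  apply hratio.congr'
  filter_upwards [hmem, hstop.eventually_gt_atTop 0] with r hr hsr
  have ha : 0 < 1 - r := sub_pos.2 hr.2
  have h1r : 0 < 1 + r := by linarith [hr.1]
  -- arsinh (k/a) = c₁ r + s r
  have e1 : Real.arsinh (k/(1-r)) = c₁ r + s r := by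
    rw [Real.arsinh, hc₁, hs]
    have h2 : 1 + (k/(1-r))^2 = ((1-r)^2+k^2)/(1-r)^2 := by field_simp
    rw [h2, Real.sqrt_div (by positivity), Real.sqrt_sq ha.le]
    rw [← add_div]
    rw [Real.log_div (by positivity) ha.ne']
    ring
  have e2 : sharpEll r = c₂ r + s r := by
    rw [sharpEll, Real.log_div h1r.ne' ha.ne', hc₂, hs]
    ring
  have hsne : s r ≠ 0 := hsr.ne'
  rw [e1, e2]
  rw [show c₁ r / s r + 1 = (c₁ r + s r)/s r by field_simp,
    show c₂ r / s r + 1 = (c₂ r + s r)/s r by field_simp,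
    div_div_div_cancel_right₀ hsne]

lemma hden_pos {r : ℝ} (hr : r ∈ Set.Ioo (0:ℝ) 1) (θ : ℝ) :
    0 < (1-r)^2 + 4*r*Real.sin (θ/2)^2 := by
  have h1 : 0 < (1-r)^2 := pow_pos (by linarith [hr.2]) 2
  nlinarith [sq_nonneg (Real.sin (θ/2)), hr.1]

lemma sharpII_eq {r : ℝ} (hr : r ∈ Set.Ioo (0:ℝ) 1) :
    sharpII r = 2 * ∫ θ in (0:ℝ)..π, (Real.sqrt ((1-r)^2 + 4*r*Real.sin (θ/2)^2))⁻¹ := by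
  set H : ℝ → ℝ := fun θ => (Real.sqrt ((1-r)^2 + 4*r*Real.sin (θ/2)^2))⁻¹ with hH
  have hHc : Continuous H := by
    apply Continuous.inv₀ (by fun_prop)
    intro θ
    exact (Real.sqrt_pos.2 (hden_pos hr θ)).ne'
  have e1 : sharpII r = ∫ θ in (0:ℝ)..(2*π), H θ :=
    intervalIntegral.integral_congr (fun θ _ => by rw [habs_eq_sqrt hr θ])
  have hsym : ∀ θ, H (2*π - θ) = H θ := by
    intro θ
    simp only [hH, sin_half_reflect]
  rw [e1, ← intervalIntegral.integral_add_adjacent_intervals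
    (hHc.intervalIntegrable 0 π) (hHc.intervalIntegrable π (2*π)),
    reflect_integral H hsym]
  ring

lemma II_lower {r : ℝ} (hr : r ∈ Set.Ioo (0:ℝ) 1) :
    2 * Real.arsinh (π/(1-r)) ≤ sharpII r := by
  have ha : 0 < 1 - r := by linarith [hr.2]
  rw [sharpII_eq hr]
  have key : Real.arsinh (π/(1-r))
      ≤ ∫ θ in (0:ℝ)..π, (Real.sqrt ((1-r)^2 + 4*r*Real.sin (θ/2)^2))⁻¹ := by
    have e2 := arsinh_integral (1-r) 1 π ha one_pos
    have e3 : (∫ θ in (0:ℝ)..π, (Real.sqrt ((1-r)^2 + (1*θ)^2))⁻¹)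
        = Real.arsinh (π/(1-r)) := by
      rw [e2]; norm_num
    rw [← e3]
    apply intervalIntegral.integral_mono_on pi_pos.le
    · apply Continuous.intervalIntegrable
      apply Continuous.inv₀ (by fun_prop)
      intro θ
      have : (0:ℝ) < (1-r)^2 + (1*θ)^2 := by positivity
      exact (Real.sqrt_pos.2 this).ne'
    · apply Continuous.intervalIntegrable
      apply Continuous.inv₀ (by fun_prop)
      intro θ
      exact (Real.sqrt_pos.2 (hden_pos hr θ)).ne'
    · intro θ hθ
      apply inv_anti₀ (Real.sqrt_pos.2 (hden_pos hr θ))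
      apply Real.sqrt_le_sqrt
      have hs1 : 0 ≤ Real.sin (θ/2) := by
        apply Real.sin_nonneg_of_nonneg_of_le_pi (by linarith [hθ.1])
        linarith [hθ.2, pi_pos]
      have hs2 : Real.sin (θ/2) ≤ θ/2 := Real.sin_le (by linarith [hθ.1])
      nlinarith [hr.2, sq_nonneg (Real.sin (θ/2)), hr.1]
  linarith

lemma II_upper {r ε : ℝ} (hε : ε ∈ Set.Ioo (0:ℝ) (1/2)) (hr1 : r < 1)
    (hr2 : (1-ε)^2 < r) (hr3 : 1/2 < r) :
    sharpII r ≤ 2*((1-ε)^2)⁻¹ * Real.arsinh (min 1 (Real.sqrt ε)/(1-r))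
      + 2*(π/Real.sin (min 1 (Real.sqrt ε)/2)) := by
  obtain ⟨hε0, hε12⟩ := hε
  set δ : ℝ := min 1 (Real.sqrt ε) with hδ
  have hδpos : 0 < δ := lt_min one_pos (Real.sqrt_pos.2 hε0)
  have hδ1 : δ ≤ 1 := min_le_left _ _
  have hδε : δ ≤ Real.sqrt ε := min_le_right _ _
  have hδπ : δ ≤ π := by linarith [Real.pi_gt_three]
  have hr0 : (0:ℝ) < r := by linarith
  have hr' : r ∈ Set.Ioo (0:ℝ) 1 := ⟨hr0, hr1⟩
  have ha : 0 < 1 - r := by linarith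
  have he1 : 0 < 1 - ε := by linarith
  have hc : 0 < (1-ε)^2 := by positivity
  have hsδ : 0 < Real.sin (δ/2) := by
    apply Real.sin_pos_of_pos_of_lt_pi (by linarith)
    calc δ/2 ≤ 1/2 := by linarith
      _ < π := by linarith [Real.pi_gt_three]
  set H : ℝ → ℝ := fun θ => (Real.sqrt ((1-r)^2 + 4*r*Real.sin (θ/2)^2))⁻¹ with hH
  have hHc : Continuous H := by
    apply Continuous.inv₀ (by fun_prop)
    intro θ
    exact (Real.sqrt_pos.2 (hden_pos hr' θ)).ne'
  rw [sharpII_eq hr']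
  have hsplit : (∫ θ in (0:ℝ)..π, H θ) = (∫ θ in (0:ℝ)..δ, H θ) + ∫ θ in δ..π, H θ := by
    rw [intervalIntegral.integral_add_adjacent_intervals
      (hHc.intervalIntegrable _ _) (hHc.intervalIntegrable _ _)]
  have bound1 : (∫ θ in (0:ℝ)..δ, H θ) ≤ ((1-ε)^2)⁻¹ * Real.arsinh (δ/(1-r)) := by
    have hptw : ∀ θ ∈ Set.Icc (0:ℝ) δ, H θ ≤ (Real.sqrt ((1-r)^2 + ((1-ε)^2*θ)^2))⁻¹ := by
      intro θ hθ
      have hsin : (1-ε)*(θ/2) ≤ Real.sin (θ/2) := by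
        rcases eq_or_lt_of_le hθ.1 with h0 | h0
        · rw [← h0]; simp
        · have hx1 : θ/2 ≤ 1 := by linarith [hθ.2, hδ1]
          have hcube := Real.sin_gt_sub_cube (by linarith : 0 < θ/2)
          have hxsq : (θ/2)^2 ≤ ε := by
            have h1 : θ ≤ Real.sqrt ε := le_trans hθ.2 hδε
            have h2 : θ^2 ≤ ε := by
              calc θ^2 ≤ (Real.sqrt ε)^2 := by
                    apply pow_le_pow_left₀ (le_of_lt h0) h1
                _ = ε := Real.sq_sqrt hε0.le
            nlinarith [sq_nonneg θ]
          nlinarith [hcube]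
      apply inv_anti₀ (Real.sqrt_pos.2 (by positivity))
      apply Real.sqrt_le_sqrt
      have hsin0 : 0 ≤ (1-ε)*(θ/2) := by
        apply mul_nonneg he1.le
        linarith [hθ.1]
      have h4 : ((1-ε)*(θ/2))^2 ≤ Real.sin (θ/2)^2 := by
        apply pow_le_pow_left₀ hsin0 hsin
      nlinarith [h4, hr2.le, sq_nonneg θ, sq_nonneg ((1-ε)*θ), hε0]
    have hint2 : IntervalIntegrable (fun θ : ℝ => (Real.sqrt ((1-r)^2 + ((1-ε)^2*θ)^2))⁻¹)
        MeasureTheory.volume 0 δ := by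
      apply Continuous.intervalIntegrable
      apply Continuous.inv₀ (by fun_prop)
      intro θ
      exact (Real.sqrt_pos.2 (by positivity)).ne'
    have h5 := intervalIntegral.integral_mono_on hδpos.le
      (hHc.intervalIntegrable _ _) hint2 hptw
    have h6 := arsinh_integral (1-r) ((1-ε)^2) δ ha hc
    rw [h6] at h5
    refine h5.trans ?_
    apply mul_le_mul_of_nonneg_left _ (by positivity)
    rw [Real.arsinh_le_arsinh, div_le_div_iff_of_pos_right ha]
    nlinarith [hδpos.le, hε0]
  have bound2 : (∫ θ in δ..π, H θ) ≤ π / Real.sin (δ/2) := by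
    have hptw : ∀ θ ∈ Set.Icc δ π, H θ ≤ (Real.sin (δ/2))⁻¹ := by
      intro θ hθ
      have hmono : Real.sin (δ/2) ≤ Real.sin (θ/2) := by
        apply Real.sin_le_sin_of_le_of_le_pi_div_two (by linarith)
          (by linarith [hθ.2]) (by linarith [hθ.1])
      apply inv_anti₀ hsδ
      rw [Real.le_sqrt hsδ.le (by positivity)]
      have h8 : Real.sin (δ/2)^2 ≤ Real.sin (θ/2)^2 := pow_le_pow_left₀ hsδ.le hmono 2
      nlinarith [h8, sq_nonneg (1-r), hr3, sq_nonneg (Real.sin (θ/2))]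
    have h7 := intervalIntegral.integral_mono_on hδπ (hHc.intervalIntegrable _ _)
      (intervalIntegrable_const :
        IntervalIntegrable (fun _ => (Real.sin (δ/2))⁻¹) MeasureTheory.volume δ π) hptw
    rw [intervalIntegral.integral_const, smul_eq_mul] at h7
    refine h7.trans ?_
    rw [div_eq_mul_inv π]
    apply mul_le_mul_of_nonneg_right _ (inv_nonneg.2 hsδ.le)
    linarith [hδpos]
  rw [hsplit]
  have e9 : 2*(π/Real.sin (δ/2)) = 2 * (π/Real.sin (min 1 (Real.sqrt ε)/2)) := by rw [hδ]
  linarith [bound1, bound2]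

lemma sharpII_div_ell : Tendsto (fun r => sharpII r / sharpEll r)
    (nhdsWithin 1 (Set.Ioo 0 1)) (nhds 2) := by
  set F := nhdsWithin (1:ℝ) (Set.Ioo 0 1) with hF
  have hmem : ∀ᶠ r in F, r ∈ Set.Ioo (0:ℝ) 1 := eventually_mem_nhdsWithin
  have hellpos : ∀ᶠ r in F, 0 < sharpEll r := by
    filter_upwards [hmem] with r hr
    have h1 : (0:ℝ) < 1 - r := by linarith [hr.2]
    apply Real.log_pos
    rw [lt_div_iff₀ h1]; linarith [hr.1]
  rw [tendsto_order]
  constructor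
  · intro b hb
    have hlow : Tendsto (fun r => 2 * (Real.arsinh (π/(1-r)) / sharpEll r)) F (nhds 2) := by
      have h := (arsinh_div_ell π pi_pos).const_mul (2:ℝ)
      rwa [mul_one] at h
    have hev : ∀ᶠ r in F, b < 2 * (Real.arsinh (π/(1-r)) / sharpEll r) :=
      hlow.eventually (eventually_gt_nhds hb)
    filter_upwards [hmem, hellpos, hev] with r hr hell hlb
    calc b < 2 * (Real.arsinh (π/(1-r)) / sharpEll r) := hlb
      _ = 2 * Real.arsinh (π/(1-r)) / sharpEll r := by ring
      _ ≤ sharpII r / sharpEll r := by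
          apply div_le_div_of_nonneg_right (II_lower hr) hell.le
  · intro b hb
    have hcont : Tendsto (fun ε : ℝ => 2/(1-ε)^2) (nhdsWithin 0 (Set.Ioi 0)) (nhds 2) := by
      have hct : ContinuousAt (fun ε : ℝ => 2/(1-ε)^2) 0 := by
        apply ContinuousAt.div continuousAt_const (by fun_prop)
        norm_num
      have h := hct.tendsto
      norm_num at h
      exact h.mono_left nhdsWithin_le_nhds
    have hev0 : ∀ᶠ ε in nhdsWithin (0:ℝ) (Set.Ioi 0), 2/(1-ε)^2 < b :=
      hcont.eventually (eventually_lt_nhds hb)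
    have hev1 : ∀ᶠ ε in nhdsWithin (0:ℝ) (Set.Ioi 0), ε ∈ Set.Ioo (0:ℝ) (1/2) := by
      have h2 : ∀ᶠ ε in nhds (0:ℝ), ε < 1/2 := eventually_lt_nhds (by norm_num)
      filter_upwards [eventually_mem_nhdsWithin, h2.filter_mono nhdsWithin_le_nhds]
        with ε h3 h4
      exact ⟨h3, h4⟩
    obtain ⟨ε, hεb, hε⟩ := (hev0.and hev1).exists
    set δ : ℝ := min 1 (Real.sqrt ε) with hδ
    have hδpos : 0 < δ := lt_min one_pos (Real.sqrt_pos.2 hε.1)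
    have hδ1' : δ ≤ 1 := min_le_left _ _
    have hsδ : 0 < Real.sin (δ/2) := by
      apply Real.sin_pos_of_pos_of_lt_pi (by linarith)
      calc δ/2 ≤ 1/2 := by linarith
        _ < π := by linarith [Real.pi_gt_three]
    have hUt : Tendsto (fun r => 2*((1-ε)^2)⁻¹ * (Real.arsinh (δ/(1-r)) / sharpEll r)
        + (2*(π/Real.sin (δ/2))) / sharpEll r) F (nhds (2/(1-ε)^2)) := by
      have hA := (arsinh_div_ell δ hδpos).const_mul (2*((1-ε)^2)⁻¹)
      rw [mul_one] at hA
      have hB : Tendsto (fun r => (2*(π/Real.sin (δ/2))) / sharpEll r) F (nhds 0) := by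
        have h := sharpEll_tendsto.inv_tendsto_atTop.const_mul (2*(π/Real.sin (δ/2)))
        rw [mul_zero] at h
        exact h.congr fun r => (div_eq_mul_inv _ _).symm
      have h9 := hA.add hB
      rw [add_zero] at h9
      have e10 : 2*((1-ε)^2)⁻¹ = 2/(1-ε)^2 := by rw [div_eq_mul_inv]
      rw [e10] at h9
      exact h9
    have hevU := hUt.eventually (eventually_lt_nhds hεb)
    have hevr : ∀ᶠ r in F, (1-ε)^2 < r ∧ 1/2 < r := by
      have hm : max ((1-ε)^2) (1/2) < 1 := by
        apply max_lt _ (by norm_num)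
        nlinarith [hε.1, hε.2]
      have hFm : Set.Ioi (max ((1-ε)^2) (1/2)) ∈ F := by
        rw [hF]
        apply mem_nhdsWithin_of_mem_nhds
        exact Ioi_mem_nhds hm
      filter_upwards [hFm] with r hrm
      exact ⟨lt_of_le_of_lt (le_max_left _ _) hrm, lt_of_le_of_lt (le_max_right _ _) hrm⟩
    filter_upwards [hmem, hellpos, hevU, hevr] with r hr hell hU hrc
    have hup := II_upper hε hr.2 hrc.1 hrc.2
    calc sharpII r / sharpEll r
        ≤ (2*((1-ε)^2)⁻¹ * Real.arsinh (δ/(1-r)) + 2*(π/Real.sin (δ/2))) / sharpEll r := by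
          apply div_le_div_of_nonneg_right _ hell.le
          exact hup
      _ = 2*((1-ε)^2)⁻¹ * (Real.arsinh (δ/(1-r)) / sharpEll r)
          + (2*(π/Real.sin (δ/2))) / sharpEll r := by ring
      _ < b := hU



/-- **Sharpness example.** With `f_r(z) = Re(((1+rz)/(1-rz))^{1/p})` (principal branch) and
`p > 1`, the ratio `(∫_{-1}^{1} |f_r(x)|^p dx) / (∫₀^{2π} |f_r(e^{iθ})|^p dθ)` tends to
`(1/2) cos^{-p}(π/(2p))` as `r → 1⁻`. -/
theorem sharpness_ratio_limit (p : ℝ) (hp : 1 < p) :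
    Tendsto (fun r : ℝ =>
        (∫ x in (-1:ℝ)..1,
          |((((1 : ℂ) + (r : ℂ) * (x : ℂ)) / ((1 : ℂ) - (r : ℂ) * (x : ℂ))) ^
              ((1 / p : ℝ) : ℂ)).re| ^ p) /
        (∫ θ in (0:ℝ)..(2 * π),
          |((((1 : ℂ) + (r : ℂ) * Complex.exp (θ * Complex.I)) /
              ((1 : ℂ) - (r : ℂ) * Complex.exp (θ * Complex.I))) ^
              ((1 / p : ℝ) : ℂ)).re| ^ p))
      (nhdsWithin 1 (Set.Ioo 0 1))
      (nhds ((1 / 2) * (Real.cos (π / (2 * p)))⁻¹ ^ p)) := by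
  have hp0 : 0 < p := lt_trans one_pos hp
  set F := nhdsWithin (1:ℝ) (Set.Ioo 0 1) with hF
  set K : ℝ := Real.cos (π / (2 * p)) ^ p with hK
  have hcpos : 0 < Real.cos (π / (2 * p)) := by
    apply Real.cos_pos_of_mem_Ioo
    constructor
    · have : 0 < π / (2 * p) := by positivity
      linarith [this, pi_pos]
    · rw [div_lt_div_iff₀ (by positivity) (by norm_num : (0:ℝ) < 2)]
      nlinarith [pi_pos]
  have hKpos : 0 < K := Real.rpow_pos_of_pos hcpos p
  have hmem : ∀ᶠ r in F, r ∈ Set.Ioo (0:ℝ) 1 := eventually_mem_nhdsWithin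
  have hmem2 : ∀ᶠ r in F, r ∈ Set.Ioo (1/2:ℝ) 1 := by
    have : Set.Ioo (1/2:ℝ) 1 ∈ F := by
      apply mem_nhdsWithin.2
      exact ⟨Set.Ioi (1/2), isOpen_Ioi, by norm_num, fun x hx => ⟨hx.1, hx.2.2⟩⟩
    exact this
  have hellpos : ∀ᶠ r in F, 0 < sharpEll r := by
    filter_upwards [hmem] with r hr
    have h1 : (0:ℝ) < 1 - r := by linarith [hr.2]
    apply Real.log_pos
    rw [lt_div_iff₀ h1]; linarith [hr.1]
  -- N / ell → 2
  have hN : Tendsto (fun r => sharpN p r / sharpEll r) F (nhds 2) := by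
    have ha : Tendsto (fun r : ℝ => 2 / r) F (nhds 2) := by
      have hc : ContinuousAt (fun r : ℝ => 2 / r) 1 :=
        continuousAt_const.div continuousAt_id one_ne_zero
      have : Tendsto (fun r : ℝ => 2 / r) (nhds (1:ℝ)) (nhds (2/1)) := hc.tendsto
      norm_num at this
      exact this.mono_left nhdsWithin_le_nhds
    have hb : Tendsto (fun r : ℝ => 2 / sharpEll r) F (nhds 0) := by
      have h := sharpEll_tendsto.inv_tendsto_atTop.const_mul (2:ℝ)
      rw [mul_zero] at h
      exact h.congr fun r => (div_eq_mul_inv 2 _).symm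
    have h1 : Tendsto (fun r : ℝ => 2 / r - 2 / sharpEll r) F (nhds 2) := by
      simpa using ha.sub hb
    apply h1.congr'
    filter_upwards [hmem, hellpos] with r hr hell
    rw [sharpN_eq p hp hr, sub_div, mul_div_assoc, div_self hell.ne', mul_one]
  -- D / ell → 4K
  have hD : Tendsto (fun r => sharpD p r / sharpEll r) F (nhds (4 * K)) := by
    obtain ⟨M, hM⟩ := sharpD_close p hp
    have hI : Tendsto (fun r => 2 * K * (sharpII r / sharpEll r)) F (nhds (2 * K * 2)) :=
      sharpII_div_ell.const_mul (2 * K)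
    have hE : Tendsto (fun r => (sharpD p r - 2 * K * sharpII r) / sharpEll r) F (nhds 0) := by
      have hg : Tendsto (fun r => M / sharpEll r) F (nhds 0) := by
        have h := sharpEll_tendsto.inv_tendsto_atTop.const_mul M
        rw [mul_zero] at h
        exact h.congr fun r => (div_eq_mul_inv M _).symm
      apply squeeze_zero_norm' ?_ hg
      filter_upwards [hmem2, hellpos] with r hr hell
      rw [Real.norm_eq_abs, abs_div, abs_of_pos hell]
      gcongr
      exact hM r hr
    have := hI.add hE
    have h42 : 2 * K * 2 + 0 = 4 * K := by ring
    rw [h42] at this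
    apply this.congr'
    filter_upwards [hellpos] with r hell
    ring
  -- combine
  have hfinal : Tendsto (fun r => (sharpN p r / sharpEll r) / (sharpD p r / sharpEll r)) F
      (nhds (2 / (4 * K))) := hN.div hD (by positivity)
  have heq : (2 : ℝ) / (4 * K) = (1 / 2) * (Real.cos (π / (2 * p)))⁻¹ ^ p := by
    rw [Real.inv_rpow hcpos.le, ← hK, div_eq_iff (by positivity : (4:ℝ) * K ≠ 0)]
    field_simp
    ring
  rw [← heq]
  apply hfinal.congr'
  filter_upwards [hellpos] with r hell
  have : sharpN p r / sharpEll r / (sharpD p r / sharpEll r) = sharpN p r / sharpD p r := by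
    rw [div_div_div_cancel_right₀]
    exact hell.ne'
  rw [this]
  rfl
end
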